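/- arXiv:1510.08132 — 5 statements merged into one kernel-verified Lean document; each statement's English description precedes it below -/
import Mathlib

section
/- Let B be a Blaschke product of degree n with B(0) = 0 and let γ be on the unit circle. Then there exist points ζ_1,...,ζ_n on the unit circle and strictly positive reals c_1,...,c_n such that 1/(1 - conj(γ) B(z)) = Σ_{k=1}^n c_k/(1 - conj(ζ_k) z) for all z in the open unit disk; moreover c_k = B(ζ_k)/(ζ_k B'(ζ_k)). -/
open Polynomial Finset

private lemma aux_normSq (a z : ℂ) :
    Complex.normSq (1 - (starRingEnd ℂ) a * z) - Complex.normSq (z - a)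
      = (1 - Complex.normSq a) * (1 - Complex.normSq z) := by
  simp only [Complex.normSq_apply, Complex.sub_re, Complex.sub_im, Complex.mul_re, Complex.mul_im,
    Complex.one_re, Complex.one_im, Complex.conj_re, Complex.conj_im]
  ring

private lemma aux_derivative_prod {ι : Type*} [DecidableEq ι] (s : Finset ι) (f : ι → Polynomial ℂ) :
    Polynomial.derivative (∏ i ∈ s, f i)
      = ∑ i ∈ s, (∏ j ∈ s.erase i, f j) * Polynomial.derivative (f i) := by
  classical
  induction s using Finset.induction_on with
  | empty => simp
  | @insert a s h ih =>
    rw [Finset.prod_insert h, derivative_mul, ih, Finset.mul_sum, Finset.sum_insert h,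
      Finset.erase_insert h]
    rw [mul_comm (derivative (f a)) (∏ j ∈ s, f j)]
    congr 1
    refine Finset.sum_congr rfl fun i hi => ?_
    have hia : a ≠ i := fun hh => h (hh ▸ hi)
    rw [Finset.erase_insert_of_ne hia]
    rw [Finset.prod_insert (fun hh => h (Finset.mem_of_mem_erase hh))]
    ring

private lemma aux_term (a ζ : ℂ) (hζ : ζ * (starRingEnd ℂ) ζ = 1) (hza : ζ - a ≠ 0) :
    ζ * (1 - (starRingEnd ℂ) a * ζ) + ζ * (starRingEnd ℂ) a * (ζ - a)
      = (((1 - Complex.normSq a) / Complex.normSq (ζ - a) : ℝ) : ℂ)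
          * ((ζ - a) * (1 - (starRingEnd ℂ) a * ζ)) := by
  have h1 : ((Complex.normSq (ζ - a) : ℝ) : ℂ) = (ζ - a) * (starRingEnd ℂ) (ζ - a) :=
    (Complex.mul_conj _).symm
  have h2 : ((Complex.normSq a : ℝ) : ℂ) = a * (starRingEnd ℂ) a := (Complex.mul_conj _).symm
  have hns : ((Complex.normSq (ζ - a) : ℝ) : ℂ) ≠ 0 := by
    simpa [Complex.normSq_eq_zero] using hza
  push_cast
  rw [div_mul_eq_mul_div, eq_div_iff hns, h1, h2, map_sub]
  linear_combination ((1 - a * (starRingEnd ℂ) a) * (ζ - a)) * hζ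

/-- Lemma 2.3 (partial-fraction expansion): if `B` is a Blaschke product of degree `n`
with `B(0) = 0` and `γ` is on the unit circle, then there are points `ζ k` on the unit
circle and strictly positive reals `c k` with `c k = B(ζ k)/(ζ k B'(ζ k))` such that
`1/(1 - conj γ · B z) = ∑ c k / (1 - conj (ζ k) · z)` on the open unit disk. -/
theorem stmt2 (n : ℕ) (a : Fin n → ℂ) (ha : ∀ k, ‖a k‖ < 1)
    (c : ℂ) (hc : ‖c‖ = 1)
    (B : ℂ → ℂ)
    (hB : ∀ z, B z = c * ∏ k, (a k - z) / (1 - (starRingEnd ℂ) (a k) * z))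
    (hB0 : ∃ k, a k = 0)
    (γ : ℂ) (hγ : ‖γ‖ = 1) :
    ∃ (ζ : Fin n → ℂ) (cc : Fin n → ℝ),
      (∀ k, ‖ζ k‖ = 1) ∧ (∀ k, 0 < cc k) ∧
      (∀ k, (cc k : ℂ) = B (ζ k) / (ζ k * deriv B (ζ k))) ∧
      ∀ z ∈ Metric.ball (0 : ℂ) 1,
        1 / (1 - (starRingEnd ℂ) γ * B z) =
          ∑ k, (cc k : ℂ) / (1 - (starRingEnd ℂ) (ζ k) * z) := by
  classical
  obtain ⟨k0, hk0⟩ := hB0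
  set c' : ℂ := c * (-1 : ℂ) ^ n with hc'def
  have hc'n : ‖c'‖ = 1 := by simp [hc'def, hc]
  have hc'0 : c' ≠ 0 := by intro h; rw [h] at hc'n; simp at hc'n
  have hγnsq : Complex.normSq γ = 1 := by
    rw [Complex.normSq_eq_norm_sq, hγ]; norm_num
  have hγγ : (starRingEnd ℂ) γ * γ = 1 := by
    rw [mul_comm, Complex.mul_conj, hγnsq]; norm_num
  set d : ℂ := γ * c'⁻¹ with hddef
  have hd0 : d ≠ 0 := by
    apply mul_ne_zero _ (inv_ne_zero hc'0)
    intro h; rw [h] at hγ; simp at hγ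
  have hdd : (starRingEnd ℂ) γ * c' * d = 1 := by
    have : (starRingEnd ℂ) γ * c' * (γ * c'⁻¹) = ((starRingEnd ℂ) γ * γ) * (c' * c'⁻¹) := by
      ring
    rw [hddef, this, hγγ, mul_inv_cancel₀ hc'0, one_mul]
  have hdnsq : Complex.normSq d = 1 := by
    have h1 : Complex.normSq c' = 1 := by
      rw [Complex.normSq_eq_norm_sq, hc'n]; norm_num
    rw [hddef, Complex.normSq_mul, Complex.normSq_inv, h1, hγnsq]; norm_num
  set P : Polynomial ℂ := ∏ k, (X - C (a k)) with hPdef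
  set Q : Polynomial ℂ := ∏ k, (1 - C ((starRingEnd ℂ) (a k)) * X) with hQdef
  set R : Polynomial ℂ := P - C d * Q with hRdef
  have hPev : ∀ z, P.eval z = ∏ k, (z - a k) := by
    intro z; rw [hPdef, eval_prod]; simp
  have hQev : ∀ z, Q.eval z = ∏ k, (1 - (starRingEnd ℂ) (a k) * z) := by
    intro z; rw [hQdef, eval_prod]; simp
  have hQne : ∀ z : ℂ, ‖z‖ ≤ 1 → Q.eval z ≠ 0 := by
    intro z hz
    rw [hQev]
    apply Finset.prod_ne_zero_iff.2
    intro k _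
    intro h
    have h2 : ‖(starRingEnd ℂ) (a k) * z‖ < 1 := by
      rw [norm_mul, RCLike.norm_conj]
      calc ‖a k‖ * ‖z‖ ≤ ‖a k‖ * 1 := by
            exact mul_le_mul_of_nonneg_left hz (norm_nonneg _)
        _ < 1 := by simpa using ha k
    rw [sub_eq_zero] at h
    rw [← h] at h2; simp at h2
  have hPne1 : ∀ z : ℂ, ‖z‖ = 1 → P.eval z ≠ 0 := by
    intro z hz
    rw [hPev]
    apply Finset.prod_ne_zero_iff.2
    intro k _
    intro h
    rw [sub_eq_zero] at h
    have h2 := ha k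
    rw [← h, hz] at h2
    exact lt_irrefl _ h2
  have hBeq : ∀ z, B z = c' * P.eval z / Q.eval z := by
    intro z
    rw [hB z, hPev, hQev, Finset.prod_div_distrib]
    have h1 : ∏ k, (a k - z) = (-1 : ℂ) ^ n * ∏ k, (z - a k) := by
      calc ∏ k, (a k - z) = ∏ k : Fin n, (-1 : ℂ) * (z - a k) := by
            apply Finset.prod_congr rfl; intro k _; ring
        _ = (∏ _k : Fin n, (-1 : ℂ)) * ∏ k, (z - a k) := Finset.prod_mul_distrib
        _ = (-1 : ℂ) ^ n * ∏ k, (z - a k) := by simp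
    rw [h1, hc'def]
    ring
  -- degrees
  have hPm : P.Monic := monic_prod_of_monic _ _ fun k _ => monic_X_sub_C (a k)
  have hPdeg : P.natDegree = n := by
    rw [hPdef, natDegree_prod _ _ fun k _ => X_sub_C_ne_zero (a k)]
    simp
  have hQdeg : Q.degree < (n : ℕ) := by
    have hper : ∀ k, (1 - C ((starRingEnd ℂ) (a k)) * X).natDegree ≤ 1 := by
      intro k
      refine le_trans (natDegree_sub_le _ _) ?_
      simp only [natDegree_one, max_le_iff]
      exact ⟨Nat.zero_le _, le_trans (natDegree_C_mul_le _ _) (le_of_eq natDegree_X)⟩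
    have hk0' : (1 - C ((starRingEnd ℂ) (a k0)) * X).natDegree = 0 := by
      rw [hk0]; simp
    have h1 : Q.natDegree ≤ ∑ k, (1 - C ((starRingEnd ℂ) (a k)) * X).natDegree :=
      natDegree_prod_le _ _
    have h2 : ∑ k, (1 - C ((starRingEnd ℂ) (a k)) * X).natDegree < ∑ _k : Fin n, 1 := by
      refine Finset.sum_lt_sum (fun k _ => hper k) ⟨k0, Finset.mem_univ _, ?_⟩
      rw [hk0']; norm_num
    have h3 : Q.natDegree < n := by
      refine lt_of_le_of_lt h1 (lt_of_lt_of_le h2 ?_)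
      simp
    exact lt_of_le_of_lt degree_le_natDegree (by exact_mod_cast h3)
  have hdegP : P.degree = (n : ℕ) := by
    rw [degree_eq_natDegree hPm.ne_zero, hPdeg]
  have hdegCdQ : (C d * Q).degree < P.degree := by
    calc (C d * Q).degree ≤ 0 + Q.degree :=
          le_trans (degree_mul_le _ _) (add_le_add degree_C_le le_rfl)
      _ = Q.degree := zero_add _
      _ < (n : ℕ) := hQdeg
      _ = P.degree := hdegP.symm
  have hRm : R.Monic := by
    have h : R = P + -(C d * Q) := by rw [hRdef]; ring
    rw [h]
    exact hPm.add_of_left (by rwa [degree_neg])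
  have hRdeg : R.natDegree = n := by
    have h : R.degree = (n : ℕ) := by
      rw [hRdef, degree_sub_eq_left_of_degree_lt hdegCdQ, hdegP]
    exact natDegree_eq_of_degree_eq_some h
  have hR0 : R ≠ 0 := hRm.ne_zero
  have hcard : Multiset.card R.roots = n := by
    rw [← hRdeg]
    exact (splits_iff_card_roots.mp (IsAlgClosed.splits R))
  -- roots facts
  have hrootPQ : ∀ ζ : ℂ, R.eval ζ = 0 → P.eval ζ = d * Q.eval ζ := by
    intro ζ h
    rw [hRdef] at h; simp only [eval_sub, eval_mul, eval_C] at h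
    linear_combination h
  have hNempty : (Finset.univ : Finset (Fin n)).Nonempty := ⟨k0, Finset.mem_univ k0⟩
  have hcirc : ∀ ζ : ℂ, R.eval ζ = 0 → ‖ζ‖ = 1 := by
    intro ζ hroot
    have hpq := hrootPQ ζ hroot
    have hnsq : Complex.normSq (P.eval ζ) = Complex.normSq (Q.eval ζ) := by
      rw [hpq, Complex.normSq_mul, hdnsq, one_mul]
    rw [hPev, hQev, map_prod, map_prod] at hnsq
    rcases lt_trichotomy ‖ζ‖ 1 with hlt | heq | hgt
    · exfalso
      have hq : Q.eval ζ ≠ 0 := hQne ζ (le_of_lt hlt)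
      have hp : P.eval ζ ≠ 0 := by rw [hpq]; exact mul_ne_zero hd0 hq
      rw [hPev] at hp
      have hnsζ : Complex.normSq ζ < 1 := by
        rw [Complex.normSq_eq_norm_sq]
        nlinarith [norm_nonneg ζ]
      have hstrict : ∏ k, Complex.normSq (ζ - a k)
          < ∏ k, Complex.normSq (1 - (starRingEnd ℂ) (a k) * ζ) := by
        apply Finset.prod_lt_prod_of_nonempty _ _ hNempty
        · intro k _
          exact Complex.normSq_pos.mpr (Finset.prod_ne_zero_iff.mp hp k (Finset.mem_univ k))
        · intro k _
          have h3 := aux_normSq (a k) ζ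
          have h4 : Complex.normSq (a k) < 1 := by
            rw [Complex.normSq_eq_norm_sq]
            nlinarith [norm_nonneg (a k), ha k]
          nlinarith
      exact absurd hnsq (ne_of_lt hstrict)
    · exact heq
    · exfalso
      have hp : P.eval ζ ≠ 0 := by
        rw [hPev]
        apply Finset.prod_ne_zero_iff.2
        intro k _ h
        rw [sub_eq_zero] at h
        have := ha k
        rw [← h] at this
        linarith
      have hq : Q.eval ζ ≠ 0 := by
        intro h
        rw [hpq, h, mul_zero] at hp
        exact hp rfl
      rw [hQev] at hq
      have hnsζ : 1 < Complex.normSq ζ := by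
        rw [Complex.normSq_eq_norm_sq]
        nlinarith [norm_nonneg ζ]
      have hstrict : ∏ k, Complex.normSq (1 - (starRingEnd ℂ) (a k) * ζ)
          < ∏ k, Complex.normSq (ζ - a k) := by
        apply Finset.prod_lt_prod_of_nonempty _ _ hNempty
        · intro k _
          exact Complex.normSq_pos.mpr (Finset.prod_ne_zero_iff.mp hq k (Finset.mem_univ k))
        · intro k _
          have h3 := aux_normSq (a k) ζ
          have h4 : Complex.normSq (a k) < 1 := by
            rw [Complex.normSq_eq_norm_sq]
            nlinarith [norm_nonneg (a k), ha k]
          nlinarith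
      exact absurd hnsq (ne_of_gt hstrict)
  -- the positive sum
  set S : ℂ → ℝ := fun w => ∑ k, (1 - Complex.normSq (a k)) / Complex.normSq (w - a k)
    with hSdef
  have hansq : ∀ k, Complex.normSq (a k) < 1 := by
    intro k
    rw [Complex.normSq_eq_norm_sq]
    nlinarith [norm_nonneg (a k), ha k]
  have hwa : ∀ w : ℂ, ‖w‖ = 1 → ∀ k, w - a k ≠ 0 := by
    intro w hw k h
    rw [sub_eq_zero] at h
    have := ha k
    rw [← h, hw] at this
    linarith
  have hSpos : ∀ w : ℂ, ‖w‖ = 1 → 0 < S w := by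
    intro w hw
    apply Finset.sum_pos _ hNempty
    intro k _
    apply div_pos (by linarith [hansq k])
    exact Complex.normSq_pos.mpr (hwa w hw k)
  have hζconj : ∀ w : ℂ, ‖w‖ = 1 → w * (starRingEnd ℂ) w = 1 := by
    intro w hw
    rw [Complex.mul_conj]
    norm_cast
    rw [Complex.normSq_eq_norm_sq, hw]; norm_num
  -- evaluation of derivatives
  have hP' : ∀ w : ℂ, (derivative P).eval w = ∑ k, ∏ j ∈ Finset.univ.erase k, (w - a j) := by
    intro w
    rw [hPdef, aux_derivative_prod, eval_finset_sum]
    apply Finset.sum_congr rfl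
    intro k _
    simp [eval_prod]
  have hQ' : ∀ w : ℂ, (derivative Q).eval w
      = ∑ k, (∏ j ∈ Finset.univ.erase k, (1 - (starRingEnd ℂ) (a j) * w))
          * (-((starRingEnd ℂ) (a k))) := by
    intro w
    rw [hQdef, aux_derivative_prod, eval_finset_sum]
    apply Finset.sum_congr rfl
    intro k _
    simp [eval_prod]
  have hkey : ∀ w : ℂ, ‖w‖ = 1 →
      w * ((derivative P).eval w * Q.eval w - P.eval w * (derivative Q).eval w)
        = ((S w : ℝ) : ℂ) * (P.eval w * Q.eval w) := by
    intro w hw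
    have hScast : ((S w : ℝ) : ℂ)
        = ∑ k, (((1 - Complex.normSq (a k)) / Complex.normSq (w - a k) : ℝ) : ℂ) := by
      rw [hSdef]; push_cast; ring
    rw [hP', hQ', hScast, Finset.sum_mul, Finset.mul_sum, ← Finset.sum_sub_distrib,
      Finset.mul_sum, Finset.sum_mul]
    apply Finset.sum_congr rfl
    intro k _
    have hpk : P.eval w = (w - a k) * ∏ j ∈ Finset.univ.erase k, (w - a j) := by
      rw [hPev]; exact (Finset.mul_prod_erase _ _ (Finset.mem_univ k)).symm
    have hqk : Q.eval w = (1 - (starRingEnd ℂ) (a k) * w)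
        * ∏ j ∈ Finset.univ.erase k, (1 - (starRingEnd ℂ) (a j) * w) := by
      rw [hQev]; exact (Finset.mul_prod_erase _ _ (Finset.mem_univ k)).symm
    rw [hpk, hqk]
    linear_combination ((∏ j ∈ Finset.univ.erase k, (w - a j))
      * (∏ j ∈ Finset.univ.erase k, (1 - (starRingEnd ℂ) (a j) * w)))
      * aux_term (a k) w (hζconj w hw) (hwa w hw k)
  have hderivB : ∀ w : ℂ, ‖w‖ = 1 → deriv B w
      = (c' * (derivative P).eval w * Q.eval w - c' * P.eval w * (derivative Q).eval w)
          / (Q.eval w) ^ 2 := by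
    intro w hw
    have hBfun : B = fun z => c' * P.eval z / Q.eval z := funext hBeq
    rw [hBfun]
    have h1 : HasDerivAt (fun z : ℂ => c' * P.eval z) (c' * (derivative P).eval w) w :=
      (P.hasDerivAt w).const_mul c'
    exact (h1.div (Q.hasDerivAt w) (hQne w hw.le)).deriv
  have hRder : derivative R = derivative P - C d * derivative Q := by
    rw [hRdef, derivative_sub, derivative_C_mul]
  have hR'q : ∀ w : ℂ, R.eval w = 0 →
      w * (derivative R).eval w * Q.eval w = ((S w : ℝ) : ℂ) * (P.eval w * Q.eval w) := by
    intro w hroot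
    have hk := hkey w (hcirc w hroot)
    have hpq := hrootPQ w hroot
    rw [hRder]
    simp only [eval_sub, eval_mul, eval_C]
    linear_combination hk + w * (derivative Q).eval w * hpq
  have hR'ne : ∀ w : ℂ, R.eval w = 0 → (derivative R).eval w ≠ 0 := by
    intro w hroot h
    have hw := hcirc w hroot
    have h2 := hR'q w hroot
    rw [h, mul_zero, zero_mul] at h2
    have hS0 : ((S w : ℝ) : ℂ) ≠ 0 := by
      exact_mod_cast ne_of_gt (hSpos w hw)
    have := mul_ne_zero hS0 (mul_ne_zero (hPne1 w hw) (hQne w hw.le))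
    exact this h2.symm
  have hnd : R.roots.Nodup := by
    rw [Multiset.nodup_iff_count_le_one]
    intro w
    by_contra hcount
    push_neg at hcount
    have hmem : w ∈ R.roots := Multiset.count_pos.mp (by omega)
    have hroot : R.eval w = 0 := IsRoot.eq_zero (isRoot_of_mem_roots hmem)
    have hd' : (derivative R).eval w ≠ 0 := hR'ne w hroot
    have hdr0 : derivative R ≠ 0 := fun h => hd' (by rw [h]; simp)
    have hcnt : 2 ≤ R.rootMultiplicity w := by
      rw [← count_roots]; omega
    have hpos : 0 < (derivative R).rootMultiplicity w := by
      rw [derivative_rootMultiplicity_of_root hroot]; omega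
    exact hd' ((rootMultiplicity_pos hdr0).mp hpos)
  -- construct the root function
  have hcardF : R.roots.toFinset.card = n := by
    rw [← hcard]; exact Multiset.toFinset_card_eq_card_iff_nodup.mpr hnd
  let e : {x // x ∈ R.roots.toFinset} ≃ Fin n :=
    Fintype.equivFinOfCardEq (by rw [Fintype.card_coe]; exact hcardF)
  set ζ : Fin n → ℂ := fun k => ((e.symm k : {x // x ∈ R.roots.toFinset}) : ℂ) with hζdef
  have hζmem : ∀ k, ζ k ∈ R.roots := fun k => Multiset.mem_toFinset.mp (e.symm k).2
  have hζroot : ∀ k, R.eval (ζ k) = 0 := fun k =>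
    IsRoot.eq_zero (isRoot_of_mem_roots (hζmem k))
  have hζnorm : ∀ k, ‖ζ k‖ = 1 := fun k => hcirc _ (hζroot k)
  have hζinj : Function.Injective ζ := by
    intro i j h
    have h2 : e.symm i = e.symm j := Subtype.ext h
    exact e.symm.injective h2
  have hζne : ∀ i j : Fin n, i ≠ j → ζ i - ζ j ≠ 0 := by
    intro i j hij h
    rw [sub_eq_zero] at h
    exact hij (hζinj h)
  have hrootsmap : R.roots = Multiset.map ζ Finset.univ.val := by
    have h1 : Finset.univ.image ζ = R.roots.toFinset := by
      apply Finset.eq_of_subset_of_card_le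
      · intro x hx
        obtain ⟨k, _, hk⟩ := Finset.mem_image.mp hx
        rw [← hk]
        exact Multiset.mem_toFinset.mpr (hζmem k)
      · rw [Finset.card_image_of_injective _ hζinj, Finset.card_univ, Fintype.card_fin, hcardF]
    have h2 : R.roots.toFinset.val = R.roots := by
      rw [Multiset.toFinset_val, Multiset.dedup_eq_self.mpr hnd]
    rw [← h2, ← h1, Finset.image_val,
      Multiset.dedup_eq_self.mpr (Multiset.Nodup.map hζinj Finset.univ.nodup)]
  have hRprod : R = ∏ k, (X - C (ζ k)) := by
    conv_lhs => rw [(IsAlgClosed.splits R).eq_prod_roots_of_monic hRm]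
    rw [hrootsmap, Multiset.map_map]
    rfl
  have hRev : ∀ z, R.eval z = ∏ k, (z - ζ k) := by
    intro z; rw [hRprod, eval_prod]; simp
  have hR'eval : ∀ k, (derivative R).eval (ζ k) = ∏ j ∈ Finset.univ.erase k, (ζ k - ζ j) := by
    intro k
    rw [hRprod, aux_derivative_prod, eval_finset_sum, Finset.sum_eq_single k]
    · simp [eval_prod]
    · intro i _ hik
      rw [eval_mul, eval_prod]
      apply mul_eq_zero_of_left
      apply Finset.prod_eq_zero (Finset.mem_erase.mpr ⟨Ne.symm hik, Finset.mem_univ k⟩)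
      simp
    · intro h; exact absurd (Finset.mem_univ k) h
  -- the coefficients
  set cc : Fin n → ℝ := fun k => (S (ζ k))⁻¹ with hccdef
  have hccpos : ∀ k, 0 < cc k := fun k => inv_pos.mpr (hSpos _ (hζnorm k))
  have hcccast : ∀ k, (cc k : ℂ) = (((S (ζ k)) : ℝ) : ℂ)⁻¹ := by
    intro k; rw [hccdef]; push_cast; ring
  have hSne : ∀ k, ((S (ζ k) : ℝ) : ℂ) ≠ 0 := fun k => by
    exact_mod_cast ne_of_gt (hSpos _ (hζnorm k))
  have hqkne : ∀ k, Q.eval (ζ k) ≠ 0 := fun k => hQne _ (hζnorm k).le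
  have hpkne : ∀ k, P.eval (ζ k) ≠ 0 := fun k => hPne1 _ (hζnorm k)
  have hζk0 : ∀ k, ζ k ≠ 0 := by
    intro k h
    have := hζnorm k
    rw [h] at this; simp at this
  have hccB : ∀ k, (cc k : ℂ) = B (ζ k) / (ζ k * deriv B (ζ k)) := by
    intro k
    have hk := hkey _ (hζnorm k)
    have e1 : ζ k * deriv B (ζ k)
        = c' * ((S (ζ k) : ℝ) : ℂ) * P.eval (ζ k) / Q.eval (ζ k) := by
      rw [hderivB _ (hζnorm k), ← mul_div_assoc,
        div_eq_div_iff (pow_ne_zero 2 (hqkne k)) (hqkne k)]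
      linear_combination (c' * Q.eval (ζ k)) * hk
    have h6 : c' * ((S (ζ k) : ℝ) : ℂ) * P.eval (ζ k) / Q.eval (ζ k) ≠ 0 :=
      div_ne_zero (mul_ne_zero (mul_ne_zero hc'0 (hSne k)) (hpkne k)) (hqkne k)
    rw [hBeq, e1, hcccast k, eq_div_iff h6, ← mul_div_assoc]
    congr 1
    linear_combination (c' * P.eval (ζ k)) * inv_mul_cancel₀ (hSne k)
  have hW : ∀ k, ζ k * (∏ j ∈ Finset.univ.erase k, (ζ k - ζ j))
      = ((S (ζ k) : ℝ) : ℂ) * d * Q.eval (ζ k) := by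
    intro k
    have h2 := hR'q _ (hζroot k)
    rw [hR'eval k, hrootPQ _ (hζroot k)] at h2
    exact mul_right_cancel₀ (hqkne k) (by linear_combination h2)
  have hWne : ∀ k, (∏ j ∈ Finset.univ.erase k, (ζ k - ζ j)) ≠ 0 := by
    intro k
    apply Finset.prod_ne_zero_iff.mpr
    intro j hj
    exact hζne k j (Finset.mem_erase.mp hj).1.symm
  -- Lagrange interpolation of Q
  have hinterp : Q = Lagrange.interpolate Finset.univ ζ fun i => Q.eval (ζ i) := by
    apply Lagrange.eq_interpolate (Function.Injective.injOn hζinj)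
    rw [Finset.card_univ, Fintype.card_fin]
    exact hQdeg
  have hQz : ∀ z : ℂ, Q.eval z
      = ∑ k, Q.eval (ζ k) * ∏ j ∈ Finset.univ.erase k, ((ζ k - ζ j)⁻¹ * (z - ζ j)) := by
    intro z
    conv_lhs => rw [hinterp]
    rw [Lagrange.interpolate_apply, eval_finset_sum]
    apply Finset.sum_congr rfl
    intro k _
    rw [eval_mul, eval_C]
    congr 1
    simp only [Lagrange.basis, eval_prod, Lagrange.basisDivisor, eval_mul, eval_C, eval_sub,
      eval_X]
  -- conclusion
  refine ⟨ζ, cc, hζnorm, hccpos, hccB, ?_⟩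
  intro z hz
  have hzn : ‖z‖ < 1 := by
    simpa [Metric.mem_ball, dist_zero_right] using hz
  have hqz := hQne z hzn.le
  have hzk : ∀ k, z - ζ k ≠ 0 := by
    intro k h
    rw [sub_eq_zero] at h
    rw [h, hζnorm k] at hzn
    linarith
  have hRz : R.eval z ≠ 0 := by
    rw [hRev]
    exact Finset.prod_ne_zero_iff.mpr fun k _ => hzk k
  have hγ'c' : -((starRingEnd ℂ) γ * c') ≠ 0 := by
    apply neg_ne_zero.mpr
    apply mul_ne_zero _ hc'0
    simp only [ne_eq, _root_.map_eq_zero]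
    intro h; rw [h] at hγ; simp at hγ
  have hlhs : 1 - (starRingEnd ℂ) γ * B z = -((starRingEnd ℂ) γ * c') * R.eval z / Q.eval z := by
    rw [hBeq, hRdef]
    simp only [eval_sub, eval_mul, eval_C]
    rw [eq_div_iff hqz]
    have hBq : c' * P.eval z / Q.eval z * Q.eval z = c' * P.eval z := div_mul_cancel₀ _ hqz
    linear_combination (-(starRingEnd ℂ) γ) * hBq - (Q.eval z) * hdd
  calc 1 / (1 - (starRingEnd ℂ) γ * B z)
      = Q.eval z / (-((starRingEnd ℂ) γ * c') * R.eval z) := by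
        rw [hlhs, one_div_div]
    _ = ∑ k, Q.eval (ζ k) * (∏ j ∈ Finset.univ.erase k, ((ζ k - ζ j)⁻¹ * (z - ζ j)))
          / (-((starRingEnd ℂ) γ * c') * R.eval z) := by
        rw [hQz z, Finset.sum_div]
    _ = ∑ k, (cc k : ℂ) / (1 - (starRingEnd ℂ) (ζ k) * z) := by
        apply Finset.sum_congr rfl
        intro k _
        have hLk : (∏ j ∈ Finset.univ.erase k, ((ζ k - ζ j)⁻¹ * (z - ζ j)))
            = (∏ j ∈ Finset.univ.erase k, (ζ k - ζ j))⁻¹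
              * ∏ j ∈ Finset.univ.erase k, (z - ζ j) := by
          rw [Finset.prod_mul_distrib, Finset.prod_inv_distrib]
        have hRzk : R.eval z = (z - ζ k) * ∏ j ∈ Finset.univ.erase k, (z - ζ j) := by
          rw [hRev]; exact (Finset.mul_prod_erase _ _ (Finset.mem_univ k)).symm
        have hVne : (∏ j ∈ Finset.univ.erase k, (z - ζ j)) ≠ 0 :=
          Finset.prod_ne_zero_iff.mpr fun j _ => hzk j
        have hconj : 1 - (starRingEnd ℂ) (ζ k) * z = (starRingEnd ℂ) (ζ k) * (ζ k - z) := by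
          have h1 := hζconj _ (hζnorm k)
          linear_combination -h1
        have hconjne : (starRingEnd ℂ) (ζ k) ≠ 0 := by
          simp only [ne_eq, _root_.map_eq_zero]
          exact hζk0 k
        have hone : 1 - (starRingEnd ℂ) (ζ k) * z ≠ 0 := by
          rw [hconj]
          exact mul_ne_zero hconjne (fun h => hzk k (by linear_combination -h))
        rw [hLk, hRzk, hcccast k, div_eq_div_iff (mul_ne_zero hγ'c' (mul_ne_zero (hzk k) hVne)) hone]
        apply mul_left_cancel₀ (mul_ne_zero (hWne k)
          (mul_ne_zero (hSne k) (hζk0 k)))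
        have h1 := mul_inv_cancel₀ (hWne k)
        have h2 := mul_inv_cancel₀ (hSne k)
        have h3 := hW k
        have h4 := hζconj _ (hζnorm k)
        have h5 := hdd
        linear_combination
          (((S (ζ k) : ℝ) : ℂ) * ζ k * Q.eval (ζ k)
              * (∏ j ∈ Finset.univ.erase k, (z - ζ j))
              * (1 - (starRingEnd ℂ) (ζ k) * z)) * h1
          - (((S (ζ k) : ℝ) : ℂ) * Q.eval (ζ k)
              * (∏ j ∈ Finset.univ.erase k, (z - ζ j)) * z) * h4
          - (ζ k * (∏ j ∈ Finset.univ.erase k, (ζ k - ζ j)) * (-((starRingEnd ℂ) γ * c'))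
              * (z - ζ k) * (∏ j ∈ Finset.univ.erase k, (z - ζ j))) * h2
          - ((-((starRingEnd ℂ) γ * c')) * (z - ζ k)
              * (∏ j ∈ Finset.univ.erase k, (z - ζ j))) * h3
          - (((S (ζ k) : ℝ) : ℂ) * Q.eval (ζ k)
              * (∏ j ∈ Finset.univ.erase k, (z - ζ j)) * (ζ k - z)) * h5
end

section
/- Let T be a bounded operator on a complex Hilbert space H with numerical radius w(T) ≤ 1, and let x ∈ H with ‖x‖ ≤ 1. Then ‖Tx‖² ≤ 2 + 2√(1 - |⟨Tx,x⟩|²). -/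
open scoped InnerProductSpace
open Complex

set_option maxHeartbeats 2000000 in
lemma key6 {H : Type*} [NormedAddCommGroup H] [InnerProductSpace ℂ H]
    (T : H →L[ℂ] H)
    (hw : ∀ y : H, ‖y‖ = 1 → ‖⟪y, T y⟫_ℂ‖ ≤ 1)
    (x : H) (hx : ‖x‖ = 1) (r : ℝ) (hr : 0 ≤ r) (ha : ⟪x, T x⟫_ℂ = (r : ℂ)) :
    ‖T x‖ ^ 2 ≤ 2 + 2 * Real.sqrt (1 - r ^ 2) := by
  have hv : ∀ v : H, ‖⟪v, T v⟫_ℂ‖ ≤ ‖v‖ ^ 2 := by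
    intro v
    by_cases hv0 : v = 0
    · simp [hv0]
    · have hnv : (0:ℝ) < ‖v‖ := norm_pos_iff.mpr hv0
      set c : ℂ := ((‖v‖ : ℝ) : ℂ)⁻¹ with hc
      have hcu : ‖c • v‖ = 1 := by
        rw [norm_smul, hc]
        simp [norm_inv]
        field_simp
      have h1 := hw (c • v) hcu
      have h2 : ⟪c • v, T (c • v)⟫_ℂ = c * c * ⟪v, T v⟫_ℂ := by
        rw [map_smul, inner_smul_left, inner_smul_right, hc]
        simp [Complex.conj_ofReal]
        ring
      rw [h2] at h1
      rw [norm_mul, norm_mul] at h1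
      have hcn : ‖c‖ = (‖v‖)⁻¹ := by rw [hc]; simp
      rw [hcn] at h1
      have h3 := mul_le_mul_of_nonneg_left h1 (le_of_lt (mul_pos hnv hnv))
      calc ‖⟪v, T v⟫_ℂ‖ = (‖v‖ * ‖v‖) * ((‖v‖)⁻¹ * (‖v‖)⁻¹ * ‖⟪v, T v⟫_ℂ‖) := by
            field_simp
        _ ≤ (‖v‖ * ‖v‖) * 1 := h3
        _ = ‖v‖ ^ 2 := by ring
  have hr1 : r ≤ 1 := by
    have h := hw x hx
    rw [ha] at h
    simpa [Complex.norm_real, _root_.abs_of_nonneg hr] using h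
  set s := Real.sqrt (1 - r ^ 2) with hs
  have hs0 : 0 ≤ s := Real.sqrt_nonneg _
  have hs2 : s ^ 2 = 1 - r ^ 2 := Real.sq_sqrt (by nlinarith)
  by_cases h0 : T x = (r : ℂ) • x
  · rw [h0, norm_smul]
    have : ‖(r:ℂ)‖ = r := by simp [Complex.norm_real, _root_.abs_of_nonneg hr]
    rw [this, hx]
    nlinarith
  · set w : H := T x - (r : ℂ) • x with hwdef
    have hw0 : w ≠ 0 := sub_ne_zero.mpr h0
    set b : ℝ := ‖w‖ with hbdef
    have hb : 0 < b := norm_pos_iff.mpr hw0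
    set z : H := ((b : ℝ) : ℂ)⁻¹ • w with hzdef
    have hxx : ⟪x, x⟫_ℂ = 1 := by
      rw [inner_self_eq_norm_sq_to_K, hx]; norm_num
    have hxw : ⟪x, w⟫_ℂ = 0 := by
      rw [hwdef, inner_sub_right, inner_smul_right, ha, hxx]
      ring
    have hz1 : ‖z‖ = 1 := by
      rw [hzdef, norm_smul]
      simp only [norm_inv, Complex.norm_real, Real.norm_eq_abs, ← hbdef,
        _root_.abs_of_nonneg hb.le]
      field_simp
    have hxz : ⟪x, z⟫_ℂ = 0 := by
      rw [hzdef, inner_smul_right, hxw]; ring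
    have hzx : ⟪z, x⟫_ℂ = 0 := by
      rw [← inner_conj_symm, hxz]; simp
    have hTx : T x = (r : ℂ) • x + w := by rw [hwdef]; abel
    have hzTx : ⟪z, T x⟫_ℂ = (b : ℂ) := by
      rw [hTx, inner_add_right, inner_smul_right, hzx, hzdef, inner_smul_left]
      have hww : ⟪w, w⟫_ℂ = ((b : ℝ) : ℂ) ^ 2 := by
        rw [inner_self_eq_norm_sq_to_K]; rw [← hbdef]; rfl
      rw [hww]
      have hbne : ((b : ℝ) : ℂ) ≠ 0 := by
        simp [Complex.ofReal_ne_zero]; exact hb.ne'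
      field_simp [Complex.conj_ofReal]
      rw [one_div, map_inv₀, Complex.conj_ofReal, mul_zero, zero_add, pow_two, mul_assoc,
        mul_inv_cancel₀ hbne, mul_one]
    have hPyth : ‖T x‖ ^ 2 = r ^ 2 + b ^ 2 := by
      rw [hTx, @norm_add_sq ℂ]
      rw [inner_smul_left, hxw]
      have : ‖(r:ℂ)‖ = r := by simp [Complex.norm_real, _root_.abs_of_nonneg hr]
      simp [norm_smul, hx, this, ← hbdef]
    clear_value z
    set γ : ℂ := ⟪x, T z⟫_ℂ with hγ
    set d : ℂ := ⟪z, T z⟫_ℂ with hd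
    have hd1 : ‖d‖ ≤ 1 := hw z hz1
    clear_value b γ d
    have hexp : ∀ l : ℂ, ⟪x + l • z, T (x + l • z)⟫_ℂ
        = (r : ℂ) + l * γ + (starRingEnd ℂ) l * (b : ℂ)
          + ((starRingEnd ℂ) l * l) * d := by
      intro l
      rw [map_add, map_smul, inner_add_left, inner_add_right, inner_add_right,
        inner_smul_left, inner_smul_left, inner_smul_right, inner_smul_right,
        ha, hzTx, ← hγ, ← hd]
      ring
    have hnorm : ∀ l : ℂ, ‖x + l • z‖ ^ 2 = 1 + ‖l‖ ^ 2 := by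
      intro l
      rw [@norm_add_sq ℂ, inner_smul_right, hxz, norm_smul, hx, hz1]
      simp
    have hcon : ∀ ε : ℂ, ‖ε‖ = 1 → ∀ l : ℂ,
        (ε * ((r : ℂ) + l * γ + (starRingEnd ℂ) l * (b : ℂ)
          + ((starRingEnd ℂ) l * l) * d)).re ≤ 1 + ‖l‖ ^ 2 := by
      intro ε hε l
      have h1 : (ε * ((r : ℂ) + l * γ + (starRingEnd ℂ) l * (b : ℂ)
          + ((starRingEnd ℂ) l * l) * d)).re
          ≤ ‖ε * ((r : ℂ) + l * γ + (starRingEnd ℂ) l * (b : ℂ)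
          + ((starRingEnd ℂ) l * l) * d)‖ := Complex.re_le_norm _
      have h2 : ‖ε * ((r : ℂ) + l * γ + (starRingEnd ℂ) l * (b : ℂ)
          + ((starRingEnd ℂ) l * l) * d)‖ = ‖⟪x + l • z, T (x + l • z)⟫_ℂ‖ := by
        rw [hexp l, norm_mul, hε, one_mul]
      have h3 := hv (x + l • z)
      rw [hnorm l] at h3
      linarith [h1, h2 ▸ h1, h2.symm ▸ h3]
    have hquad : ∀ ε μ : ℂ, ‖ε‖ = 1 → ‖μ‖ = 1 →
        ((ε * (μ * γ + (starRingEnd ℂ) μ * (b : ℂ))).re) ^ 2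
          ≤ 4 * (1 - (ε * d).re) * (1 - r * ε.re) := by
      intro ε μ hε hμ
      have hq : ∀ t : ℝ, 0 ≤ (1 - (ε * d).re) * (t * t)
          + (-(ε * (μ * γ + (starRingEnd ℂ) μ * (b : ℂ))).re) * t
          + (1 - r * ε.re) := by
        intro t
        have h := hcon ε hε ((t : ℂ) * μ)
        have hμμ : (starRingEnd ℂ) μ * μ = 1 := by
          rw [mul_comm, Complex.mul_conj]
          norm_cast
          rw [← Complex.sq_norm, hμ]
          norm_num
        have e1 : ε * ((r : ℂ) + ((t : ℂ) * μ) * γ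
              + (starRingEnd ℂ) ((t : ℂ) * μ) * (b : ℂ)
              + ((starRingEnd ℂ) ((t : ℂ) * μ) * ((t : ℂ) * μ)) * d)
            = (r : ℂ) * ε + (t : ℂ) * (ε * (μ * γ + (starRingEnd ℂ) μ * (b : ℂ)))
              + ((t : ℂ) * (t : ℂ)) * (ε * d) := by
          simp only [map_mul, Complex.conj_ofReal]
          linear_combination ((t:ℂ) * (t:ℂ) * ε * d) * hμμ
        rw [e1] at h
        have hln : ‖(t : ℂ) * μ‖ ^ 2 = t * t := by
          rw [norm_mul, hμ, mul_one, Complex.norm_real, Real.norm_eq_abs]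
          rw [_root_.sq_abs]
          ring
        rw [hln] at h
        have e2 : ((r : ℂ) * ε + (t : ℂ) * (ε * (μ * γ + (starRingEnd ℂ) μ * (b : ℂ)))
              + ((t : ℂ) * (t : ℂ)) * (ε * d)).re
            = r * ε.re + t * (ε * (μ * γ + (starRingEnd ℂ) μ * (b : ℂ))).re
              + (t * t) * (ε * d).re := by
          simp [Complex.add_re, Complex.mul_re, Complex.ofReal_re, Complex.ofReal_im]
        rw [e2] at h
        nlinarith [h]
      have hdz := discrim_le_zero hq
      rw [discrim] at hdz
      nlinarith [hdz]
    
    have hA1 : (γ.re + b) ^ 2 ≤ 4 * (1 - d.re) * (1 - r) := by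
      simpa using hquad 1 1 (by simp) (by simp)
    have hA2 : (γ.re + b) ^ 2 ≤ 4 * (1 + d.re) * (1 + r) := by
      have h := hquad (-1) 1 (by simp) (by simp)
      have k : ((-1 : ℂ) * ((1:ℂ) * γ + (starRingEnd ℂ) (1:ℂ) * (b:ℂ))).re
          = -(γ.re + b) := by simp
      rw [k] at h
      have k2 : ((-1 : ℂ) * d).re = -d.re := by simp
      rw [k2] at h
      have k3 : (-1 : ℂ).re = -1 := by simp
      rw [k3] at h
      nlinarith [h]
    have hB1 : (γ.re - b) ^ 2 ≤ 4 * (1 + d.im) := by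
      have h := hquad Complex.I (-Complex.I) (by simp) (by simp)
      have k : (Complex.I * ((-Complex.I) * γ
          + (starRingEnd ℂ) (-Complex.I) * (b:ℂ))).re = γ.re - b := by
        simp [Complex.ext_iff]
        ring
      rw [k] at h
      have k2 : (Complex.I * d).re = -d.im := by simp
      rw [k2] at h
      have k3 : (Complex.I).re = 0 := by simp
      rw [k3] at h
      norm_num at h
      linarith [h]
    have hB2 : (γ.re - b) ^ 2 ≤ 4 * (1 - d.im) := by
      have h := hquad (-Complex.I) Complex.I (by simp) (by simp)
      have k : ((-Complex.I) * (Complex.I * γ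
          + (starRingEnd ℂ) Complex.I * (b:ℂ))).re = γ.re - b := by
        simp [Complex.ext_iff]
        ring
      rw [k] at h
      have k2 : ((-Complex.I) * d).re = d.im := by simp
      rw [k2] at h
      have k3 : (-Complex.I).re = 0 := by simp
      rw [k3] at h
      norm_num at h
      linarith [h]
    clear_value s w
    rw [hPyth]
    clear hquad hcon hexp hnorm hv hw hd1 ha h0 hwdef hw0 hxw hxx hTx hzTx hxz hzx hz1 hzdef hbdef hPyth
    clear hγ hd hx
    clear x z w T
    have hA : (b + γ.re) ^ 2 ≤ 4 * (1 - r ^ 2) := by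
      have e1 := mul_le_mul_of_nonneg_left hA1 (show (0:ℝ) ≤ 1 + r by linarith)
      have e2 := mul_le_mul_of_nonneg_left hA2 (show (0:ℝ) ≤ 1 - r by linarith)
      nlinarith [e1, e2]
    have hB : (b - γ.re) ^ 2 ≤ 4 := by nlinarith [hB1, hB2]
    rcases le_or_gt (-(r ^ 2)) (b * γ.re) with hc | hc
    · have h2s : b + γ.re ≤ 2 * s := by nlinarith [hA, hs2, hs0]
      have hbb : b ^ 2 ≤ 2 * s * b + r ^ 2 := by
        nlinarith [mul_le_mul_of_nonneg_left h2s hb.le, hc]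
      have hb1 : b ≤ 1 + s := by nlinarith [hbb, hs2, hs0, sq_nonneg (b - 1 - s)]
      nlinarith [hbb, hb1, hs0, hs2]
    · have h2B : b - γ.re ≤ 2 := by nlinarith [hB]
      have hbb : b ^ 2 ≤ 2 * b - r ^ 2 := by
        nlinarith [mul_le_mul_of_nonneg_left h2B hb.le, hc.le]
      have hb1 : b ≤ 1 + s := by nlinarith [hbb, hs2, hs0, sq_nonneg (b - 1 - s)]
      nlinarith [hbb, hb1]

set_option maxHeartbeats 1000000 in
lemma key6' {H : Type*} [NormedAddCommGroup H] [InnerProductSpace ℂ H]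
    (T : H →L[ℂ] H)
    (hw : ∀ y : H, ‖y‖ = 1 → ‖⟪y, T y⟫_ℂ‖ ≤ 1)
    (x : H) (hx : ‖x‖ = 1) :
    ‖T x‖ ^ 2 ≤ 2 + 2 * Real.sqrt (1 - ‖⟪x, T x⟫_ℂ‖ ^ 2) := by
  set a : ℂ := ⟪x, T x⟫_ℂ with ha
  by_cases ha0 : a = 0
  · have := key6 T hw x hx 0 le_rfl (by rw [← ha, ha0]; norm_num)
    simpa [← ha, ha0] using this
  · set μ : ℂ := (‖a‖ : ℂ) / a with hμ
    have hμ1 : ‖μ‖ = 1 := by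
      have hane : ‖a‖ ≠ 0 := by simp [ha0]
      rw [hμ, norm_div, Complex.norm_real, Real.norm_eq_abs,
        _root_.abs_of_nonneg (norm_nonneg a), div_self hane]
    have hT' : ∀ y : H, ‖y‖ = 1 → ‖⟪y, (μ • T) y⟫_ℂ‖ ≤ 1 := by
      intro y hy
      have : (μ • T) y = μ • (T y) := rfl
      rw [this, inner_smul_right, norm_mul, hμ1, one_mul]
      exact hw y hy
    have ha' : ⟪x, (μ • T) x⟫_ℂ = ((‖a‖ : ℝ) : ℂ) := by
      have : (μ • T) x = μ • (T x) := rfl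
      rw [this, inner_smul_right, ← ha, hμ]
      field_simp
    have h := key6 (μ • T) hT' x hx ‖a‖ (norm_nonneg a) ha'
    have hn : ‖(μ • T) x‖ = ‖T x‖ := by
      have : (μ • T) x = μ • (T x) := rfl
      rw [this, norm_smul, hμ1, one_mul]
    rw [hn] at h
    exact h

/-- Theorem 3.1: if `w(T) ≤ 1` and `‖x‖ ≤ 1`, then
`‖Tx‖² ≤ 2 + 2√(1 - |⟨Tx,x⟩|²)`. -/
theorem stmt6 {H : Type*} [NormedAddCommGroup H] [InnerProductSpace ℂ H]
    (T : H →L[ℂ] H)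
    (hw : ∀ y : H, ‖y‖ = 1 → ‖⟪y, T y⟫_ℂ‖ ≤ 1)
    (x : H) (hx : ‖x‖ ≤ 1) :
    ‖T x‖ ^ 2 ≤ 2 + 2 * Real.sqrt (1 - ‖⟪x, T x⟫_ℂ‖ ^ 2) := by
  by_cases hx0 : x = 0
  · simp [hx0]
  · have hnx : (0:ℝ) < ‖x‖ := norm_pos_iff.mpr hx0
    set c : ℂ := ((‖x‖ : ℝ) : ℂ)⁻¹ with hc
    have hcu : ‖c • x‖ = 1 := by
      rw [norm_smul, hc]
      simp [norm_inv]
      field_simp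
    have h := key6' T hw (c • x) hcu
    have h2 : ⟪c • x, T (c • x)⟫_ℂ = c * c * ⟪x, T x⟫_ℂ := by
      rw [map_smul, inner_smul_left, inner_smul_right, hc]
      simp [Complex.conj_ofReal]
      ring
    have h3 : ‖T (c • x)‖ = (‖x‖)⁻¹ * ‖T x‖ := by
      rw [map_smul, norm_smul, hc]
      simp
    rw [h2, h3] at h
    -- norms of inner products
    set k : ℝ := ‖⟪x, T x⟫_ℂ‖ with hk
    have hk0 : 0 ≤ k := norm_nonneg _
    have h4 : ‖c * c * ⟪x, T x⟫_ℂ‖ = (‖x‖)⁻¹ * (‖x‖)⁻¹ * k := by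
      rw [norm_mul, norm_mul, hc, hk]
      simp
    rw [h4] at h
    -- h : ((‖x‖)⁻¹ * ‖T x‖)^2 ≤ 2 + 2 * √(1 - ((‖x‖)⁻¹*(‖x‖)⁻¹*k)^2)
    have hmono : Real.sqrt (1 - ((‖x‖)⁻¹ * (‖x‖)⁻¹ * k) ^ 2)
        ≤ Real.sqrt (1 - k ^ 2) := by
      apply Real.sqrt_le_sqrt
      have hinv : 1 ≤ (‖x‖)⁻¹ := by
        rw [le_inv_comm₀] <;> simp [hnx, hx]
      have h1' : 0 ≤ ((‖x‖)⁻¹ - 1) * k := mul_nonneg (by linarith) hk0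
      have hik : k ≤ (‖x‖)⁻¹ * (‖x‖)⁻¹ * k := by nlinarith [h1', hinv, hk0]
      nlinarith [hik, hk0]
    have h5 : ((‖x‖)⁻¹ * ‖T x‖) ^ 2 ≤ 2 + 2 * Real.sqrt (1 - k ^ 2) := by
      calc ((‖x‖)⁻¹ * ‖T x‖) ^ 2 ≤ 2 + 2 * Real.sqrt (1 - ((‖x‖)⁻¹ * (‖x‖)⁻¹ * k) ^ 2) := h
        _ ≤ 2 + 2 * Real.sqrt (1 - k ^ 2) := by linarith [hmono]
    have hTx : ‖T x‖ ^ 2 = (‖x‖ ^ 2) * ((‖x‖)⁻¹ * ‖T x‖) ^ 2 := by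
      field_simp
    rw [hTx]
    have hx2 : ‖x‖ ^ 2 ≤ 1 := by nlinarith [hnx]
    have hrhs : 0 ≤ 2 + 2 * Real.sqrt (1 - k ^ 2) := by positivity
    calc (‖x‖ ^ 2) * ((‖x‖)⁻¹ * ‖T x‖) ^ 2
        ≤ (‖x‖ ^ 2) * (2 + 2 * Real.sqrt (1 - k ^ 2)) := by
          apply mul_le_mul_of_nonneg_left h5 (by positivity)
      _ ≤ 1 * (2 + 2 * Real.sqrt (1 - k ^ 2)) := by
          apply mul_le_mul_of_nonneg_right hx2 hrhs
      _ = 2 + 2 * Real.sqrt (1 - k ^ 2) := by ring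
end

section
/- Let t, s ∈ ℝ with 0 ≤ t ≤ 1/2 and s < t² - 1/4. Then there exists an operator T with w(T) ≤ 1 (namely the 2×2 matrix with entries T₁₁=T₂₁=T₂₂=0, T₁₂=2) such that I + t(T+T*) + s T*T is not positive semidefinite. -/
open scoped Matrix ComplexOrder
/-- Sharpness in Case 1 of Theorem 4.3: for `0 ≤ t ≤ 1/2` and `s < t² - 1/4`, the matrix
`T = [[0,2],[0,0]]` has numerical radius at most `1` but `I + t(T+T*) + sT*T` is not
positive semidefinite. -/
theorem stmt12 (t s : ℝ) (ht0 : 0 ≤ t) (ht : t ≤ 1 / 2) (hs : s < t ^ 2 - 1 / 4) :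
    ∃ T : Matrix (Fin 2) (Fin 2) ℂ,
      (∀ x : Fin 2 → ℂ, star x ⬝ᵥ x = 1 → ‖star x ⬝ᵥ T.mulVec x‖ ≤ 1) ∧
      T = !![0, 2; 0, 0] ∧
      ¬ ((1 : Matrix (Fin 2) (Fin 2) ℂ) + (t : ℂ) • (T + Tᴴ) + (s : ℂ) • (Tᴴ * T)).PosSemidef := by
  refine ⟨!![0, 2; 0, 0], ?_, rfl, ?_⟩
  · intro x hx
    have hx' : ‖x 0‖ ^ 2 + ‖x 1‖ ^ 2 = 1 := by
      have h := congrArg Complex.re hx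
      simpa [dotProduct, Fin.sum_univ_two, Complex.mul_re, Complex.sq_norm,
        Complex.normSq_apply] using h
    have hval : star x ⬝ᵥ (!![0, 2; 0, 0] : Matrix (Fin 2) (Fin 2) ℂ).mulVec x
        = (starRingEnd ℂ) (x 0) * (2 * x 1) := by
      simp [dotProduct, Matrix.mulVec, Fin.sum_univ_two, Matrix.vecHead, Matrix.vecTail]
    rw [hval]
    have : ‖(starRingEnd ℂ) (x 0) * (2 * x 1)‖
        = 2 * (‖x 0‖ * ‖x 1‖) := by
      simp [map_mul]; ring
    rw [this, ← hx']
    have := two_mul_le_add_sq (‖x 0‖) (‖x 1‖)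
    nlinarith [norm_nonneg (x 0), norm_nonneg (x 1)]
  · intro h
    set M : Matrix (Fin 2) (Fin 2) ℂ :=
      (1 : Matrix (Fin 2) (Fin 2) ℂ) + (t : ℂ) • (!![0, 2; 0, 0] + (!![0, 2; 0, 0])ᴴ)
        + (s : ℂ) • ((!![0, 2; 0, 0])ᴴ * !![0, 2; 0, 0]) with hM
    have hMeq : M = !![(1 : ℂ), 2 * t; 2 * t, 1 + 4 * s] := by
      ext i j
      fin_cases i <;> fin_cases j <;>
        simp [hM, Matrix.mul_apply, Fin.sum_univ_two, Matrix.one_apply, map_ofNat] <;> ring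
    have h2 := h.dotProduct_mulVec_nonneg ![(-(2 * t) : ℂ), 1]
    rw [hMeq] at h2
    have hval : star (![(-(2 * t) : ℂ), 1]) ⬝ᵥ
        (!![(1 : ℂ), 2 * t; 2 * t, 1 + 4 * s]).mulVec ![(-(2 * t) : ℂ), 1]
        = ((1 + 4 * s - 4 * t ^ 2 : ℝ) : ℂ) := by
      simp [dotProduct, Matrix.mulVec, Fin.sum_univ_two]
      push_cast
      ring
    rw [hval] at h2
    have hre : (0 : ℝ) ≤ 1 + 4 * s - 4 * t ^ 2 := by
      have := Complex.le_def.mp h2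
      simpa [← Complex.ofReal_pow] using this.1
    nlinarith
end

section
/- Let T be a bounded operator on a complex Hilbert space with W(T) contained in the closed unit disk, let α ∈ [0,1), and let φ_α(z) = (α+z)/(1+αz). Then for every θ with cos θ ≤ α, Re(e^{-iθ} φ_α(T)) ≤ I, where φ_α(T) = (αI + T)(I + αT)^{-1}. -/
open scoped InnerProductSpace

theorem key (α c σ s t u v : ℝ) (hα0 : 0 ≤ α) (hα1 : α < 1) (hc : c ≤ α)
    (hcs : c^2 + σ^2 = 1) (hs : 0 ≤ s) (ht : 0 ≤ t)
    (hst : u^2 + v^2 ≤ s * t) (hss : u^2 + v^2 ≤ s^2) :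
    0 ≤ (1 - α*c)*s + α*(α-c)*t + (2*α - (1+α^2)*c)*u - (1-α^2)*σ*v := by
  rcases eq_or_lt_of_le hs with h0 | hs
  · have hu : u = 0 := by nlinarith [sq_nonneg u, sq_nonneg v]
    have hv : v = 0 := by nlinarith [sq_nonneg u, sq_nonneg v]
    subst hu hv; subst h0
    have : 0 ≤ α*(α-c) := by nlinarith
    nlinarith
  · have hK : 0 < 1+α^2-2*α*c := by nlinarith
    have habs : ((2*α-(1+α^2)*c)^2 + ((1-α^2)*σ)^2) * s^2 = (1+α^2-2*α*c)^2 * s^2 := by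
      have hab : (2*α-(1+α^2)*c)^2 + ((1-α^2)*σ)^2 = (1+α^2-2*α*c)^2 := by
        linear_combination (1-α^2)^2 * hcs
      rw [hab]
    have hB : -((1+α^2-2*α*c)^2*(s^2+(u^2+v^2))) ≤
        2*(1+α^2-2*α*c)*(((2*α-(1+α^2)*c)*u-(1-α^2)*σ*v)*s) := by
      nlinarith [sq_nonneg ((2*α-(1+α^2)*c)*s+(1+α^2-2*α*c)*u),
        sq_nonneg ((1-α^2)*σ*s-(1+α^2-2*α*c)*v), habs]
    have term1 : 0 ≤ (1+α^2-2*α*c) * ((α*(α-c)) * (s*t - (u^2+v^2))) := by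
      have h1 : 0 ≤ α*(α-c) := by nlinarith
      have h2 : 0 ≤ s*t - (u^2+v^2) := by linarith
      positivity
    have term2 : 0 ≤ (1+α^2-2*α*c) * ((1-α^2) * (s^2 - (u^2+v^2))) := by
      have h2 : 0 ≤ s^2 - (u^2+v^2) := by linarith
      have h3 : 0 ≤ 1-α^2 := by nlinarith
      positivity
    have hfull : 0 ≤ 2*(1+α^2-2*α*c) * (s * ((1 - α*c)*s + α*(α-c)*t
        + (2*α - (1+α^2)*c)*u - (1-α^2)*σ*v)) := by linarith [hB, term1, term2]
    have h1 : s * 0 ≤ s * ((1 - α*c)*s + α*(α-c)*t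
        + (2*α - (1+α^2)*c)*u - (1-α^2)*σ*v) := by
      refine le_of_mul_le_mul_left ?_ (by linarith : (0:ℝ) < 2*(1+α^2-2*α*c))
      simpa using hfull
    simpa using le_of_mul_le_mul_left h1 hs


/-- Inequality (4.1) in Drury's teardrop theorem: if `W(T)` lies in the closed unit disk,
`α ∈ [0,1)` and `φ_α(T) = (αI + T)(I + αT)⁻¹`, then for every `θ` with `cos θ ≤ α`,
`Re(e^{-iθ} φ_α(T)) ≤ I`. -/
theorem stmt15 {H : Type*} [NormedAddCommGroup H] [InnerProductSpace ℂ H] [CompleteSpace H]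
    (T : H →L[ℂ] H)
    (hW : ∀ x : H, ‖x‖ = 1 → ‖⟪x, T x⟫_ℂ‖ ≤ 1)
    (α : ℝ) (hα0 : 0 ≤ α) (hα1 : α < 1)
    (φT : H →L[ℂ] H)
    (hφT : φT = ((α : ℂ) • (1 : H →L[ℂ] H) + T) *
        Ring.inverse ((1 : H →L[ℂ] H) + (α : ℂ) • T)) :
    ∀ θ : ℝ, Real.cos θ ≤ α →
      ((1 : H →L[ℂ] H) - (2 : ℂ)⁻¹ •
          (Complex.exp (-(θ : ℂ) * Complex.I) • φT +
            ContinuousLinearMap.adjoint (Complex.exp (-(θ : ℂ) * Complex.I) • φT))).IsPositive := by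
  classical
  have h1α : (0:ℝ) < 1 - α := by linarith
  -- numerical radius bound for all vectors
  have hnr : ∀ x : H, ‖⟪x, T x⟫_ℂ‖ ≤ ‖x‖^2 := by
    intro x
    rcases eq_or_ne x 0 with rfl | hx
    · simp
    · have hxn : ‖x‖ ≠ 0 := norm_ne_zero_iff.mpr hx
      set u : H := ((‖x‖⁻¹ : ℝ) : ℂ) • x with hu
      have h1 : ‖u‖ = 1 := by
        rw [hu, norm_smul, Complex.norm_real, norm_inv, norm_norm,
          inv_mul_cancel₀ hxn]
      have h2 := hW u h1
      have h3 : ⟪u, T u⟫_ℂ = ((‖x‖⁻¹ : ℝ) : ℂ)^2 * ⟪x, T x⟫_ℂ := by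
        rw [hu, map_smul, inner_smul_left, inner_smul_right, Complex.conj_ofReal]
        ring
      rw [h3, norm_mul] at h2
      have h4 : ‖((‖x‖⁻¹ : ℝ) : ℂ)^2‖ = (‖x‖^2)⁻¹ := by
        rw [norm_pow, Complex.norm_real, norm_inv, norm_norm]
        exact inv_pow _ 2
      rw [h4] at h2
      have hx2 : (0:ℝ) < ‖x‖^2 := by positivity
      rw [inv_mul_le_iff₀ hx2] at h2
      linarith
  set B : H →L[ℂ] H := (1 : H →L[ℂ] H) + (α : ℂ) • T with hB
  -- lower bound on re ⟪x, B x⟫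
  have hre : ∀ x : H, (1 - α) * ‖x‖^2 ≤ Complex.re ⟪x, B x⟫_ℂ := by
    intro x
    have hBapp : B x = x + (α:ℂ) • T x := rfl
    have h1 : ⟪x, B x⟫_ℂ = ⟪x, x⟫_ℂ + (α:ℂ) * ⟪x, T x⟫_ℂ := by
      rw [hBapp, inner_add_right, inner_smul_right]
    rw [h1]
    have h2 : Complex.re ⟪x, x⟫_ℂ = ‖x‖^2 := inner_self_eq_norm_sq (𝕜 := ℂ) x
    have h3 : |Complex.re ((α:ℂ) * ⟪x, T x⟫_ℂ)| ≤ α * ‖x‖^2 := by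
      calc |Complex.re ((α:ℂ) * ⟪x, T x⟫_ℂ)| ≤ ‖(α:ℂ) * ⟪x, T x⟫_ℂ‖ :=
            Complex.abs_re_le_norm _
        _ = α * ‖⟪x, T x⟫_ℂ‖ := by
            rw [norm_mul, Complex.norm_real, Real.norm_eq_abs, abs_of_nonneg hα0]
        _ ≤ α * ‖x‖^2 := mul_le_mul_of_nonneg_left (hnr x) hα0
    rw [Complex.add_re, h2]
    have := abs_le.mp h3
    linarith [this.1]
  have hlow : ∀ x : H, (1 - α) * ‖x‖ ≤ ‖B x‖ := by
    intro x
    rcases eq_or_ne x 0 with rfl | hx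
    · simp
    · have hxn : (0:ℝ) < ‖x‖ := norm_pos_iff.mpr hx
      have h1 : (1 - α) * ‖x‖^2 ≤ ‖x‖ * ‖B x‖ := by
        calc (1 - α) * ‖x‖^2 ≤ Complex.re ⟪x, B x⟫_ℂ := hre x
          _ ≤ ‖⟪x, B x⟫_ℂ‖ := Complex.re_le_norm _
          _ ≤ ‖x‖ * ‖B x‖ := norm_inner_le_norm _ _
      nlinarith
  -- adjoint of B
  have hadj_inj : ∀ x : H, ContinuousLinearMap.adjoint B x = 0 → x = 0 := by
    intro x hx
    have h1 : (1 - α) * ‖x‖^2 ≤ Complex.re ⟪x, ContinuousLinearMap.adjoint B x⟫_ℂ := by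
      rw [ContinuousLinearMap.adjoint_inner_right]
      have h2 : ⟪B x, x⟫_ℂ = (starRingEnd ℂ) ⟪x, B x⟫_ℂ := (inner_conj_symm _ _).symm
      rw [h2, Complex.conj_re]
      exact hre x
    rw [hx, inner_zero_right] at h1
    simp only [Complex.zero_re] at h1
    have h2 : ‖x‖^2 ≤ 0 := by nlinarith [h1, h1α]
    have h3 : ‖x‖ ≤ 0 := by nlinarith [norm_nonneg x]
    exact norm_eq_zero.mp (le_antisymm h3 (norm_nonneg x))
  -- B is injective
  have hker : LinearMap.ker (B : H →ₗ[ℂ] H) = ⊥ := by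
    rw [LinearMap.ker_eq_bot']
    intro x hx
    have h := hlow x
    rw [show B x = 0 from hx, norm_zero] at h
    have h0 : ‖x‖ ≤ 0 := by nlinarith [norm_nonneg x]
    exact norm_le_zero_iff.mp h0
  -- B has closed range
  have hanti : AntilipschitzWith ((1-α)⁻¹).toNNReal B := by
    apply ContinuousLinearMap.antilipschitz_of_bound
    intro x
    have h := hlow x
    rw [Real.coe_toNNReal _ (by positivity)]
    rw [inv_mul_eq_div, le_div_iff₀ h1α]
    linarith
  have hclosed : IsClosed (Set.range B) :=
    hanti.isClosed_range B.uniformContinuous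
  -- B is surjective
  have hrange : LinearMap.range (B : H →ₗ[ℂ] H) = ⊤ := by
    haveI : CompleteSpace (LinearMap.range (B : H →ₗ[ℂ] H)) := by
      have hcl : IsClosed ((LinearMap.range (B : H →ₗ[ℂ] H) : Submodule ℂ H) : Set H) := by
        have : ((LinearMap.range (B : H →ₗ[ℂ] H) : Submodule ℂ H) : Set H) = Set.range B := by
          ext z; simp [LinearMap.mem_range]
        rw [this]; exact hclosed
      exact hcl.completeSpace_coe
    rw [← Submodule.orthogonal_eq_bot_iff, Submodule.eq_bot_iff]
    intro y hy
    have h1 : ∀ x : H, ⟪B x, y⟫_ℂ = 0 := fun x =>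
      (Submodule.mem_orthogonal _ _).mp hy (B x) (LinearMap.mem_range_self _ x)
    have h2 : ContinuousLinearMap.adjoint B y = 0 := by
      have h3 := h1 (ContinuousLinearMap.adjoint B y)
      rw [← ContinuousLinearMap.adjoint_inner_right] at h3
      exact inner_self_eq_zero.mp h3
    exact hadj_inj y h2
  -- B is a unit
  have hunit : IsUnit B := by
    let e := ContinuousLinearEquiv.ofBijective B hker hrange
    have he : ∀ x, e x = B x := fun x => rfl
    refine ⟨⟨B, (e.symm : H →L[ℂ] H), ?_, ?_⟩, rfl⟩
    · ext x
      simp only [ContinuousLinearMap.mul_apply, ContinuousLinearMap.one_apply,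
        ContinuousLinearMap.coe_coe]
      rw [← he]
      exact e.apply_symm_apply x
    · ext x
      simp only [ContinuousLinearMap.mul_apply, ContinuousLinearMap.one_apply,
        ContinuousLinearMap.coe_coe]
      rw [← he]
      exact e.symm_apply_apply x
  have hinv : Ring.inverse B * B = 1 := Ring.inverse_mul_cancel _ hunit
  have hsurj : Function.Surjective B := fun x => LinearMap.range_eq_top.mp hrange x
  have hφB : ∀ y : H, φT (B y) = (α:ℂ) • y + T y := by
    intro y
    rw [hφT, ContinuousLinearMap.mul_apply]
    have h1 : Ring.inverse ((1 : H →L[ℂ] H) + (α : ℂ) • T) (B y) = y := by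
      have := congrArg (fun f => f y) hinv
      simpa only [ContinuousLinearMap.mul_apply, ContinuousLinearMap.one_apply] using this
    rw [h1]
    simp
  intro θ hθ
  set c : ℂ := Complex.exp (-(θ : ℂ) * Complex.I) with hc
  have hcre : c.re = Real.cos θ := by
    rw [hc, show (-(θ:ℂ) * Complex.I) = ((-θ : ℝ) : ℂ) * Complex.I by push_cast; ring,
      Complex.exp_ofReal_mul_I_re]
    exact Real.cos_neg θ
  have hcim : c.im = -Real.sin θ := by
    rw [hc, show (-(θ:ℂ) * Complex.I) = ((-θ : ℝ) : ℂ) * Complex.I by push_cast; ring,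
      Complex.exp_ofReal_mul_I_im]
    exact Real.sin_neg θ
  constructor
  · -- self-adjointness
    have h1 : IsSelfAdjoint ((2 : ℂ)⁻¹ • (c • φT + ContinuousLinearMap.adjoint (c • φT))) := by
      apply IsSelfAdjoint.smul
      · simp [IsSelfAdjoint, Complex.ext_iff]
      · rw [← ContinuousLinearMap.star_eq_adjoint]
        exact IsSelfAdjoint.add_star_self _
    exact ((IsSelfAdjoint.one (H →L[ℂ] H)).sub h1).isSymmetric
  · -- positivity
    intro x
    rw [ContinuousLinearMap.reApplyInnerSelf_apply]
    obtain ⟨y, rfl⟩ := hsurj x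
    simp only [ContinuousLinearMap.sub_apply, ContinuousLinearMap.smul_apply,
      ContinuousLinearMap.add_apply, ContinuousLinearMap.one_apply, RCLike.re_to_complex]
    set z : ℂ := ⟪φT (B y), B y⟫_ℂ with hz
    have h1 : ⟪c • φT (B y), B y⟫_ℂ = (starRingEnd ℂ) (c * (starRingEnd ℂ) z) := by
      rw [inner_smul_left, map_mul, Complex.conj_conj]
    have h2 : ⟪(ContinuousLinearMap.adjoint (c • φT)) (B y), B y⟫_ℂ
        = c * (starRingEnd ℂ) z := by
      rw [ContinuousLinearMap.adjoint_inner_left, ContinuousLinearMap.smul_apply,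
        inner_smul_right, ← inner_conj_symm]
    rw [inner_sub_left, inner_smul_left, inner_add_left, h1, h2]
    have h3 : ⟪B y, B y⟫_ℂ = ((‖B y‖^2 : ℝ) : ℂ) := by
      rw [inner_self_eq_norm_sq_to_K]; norm_cast
    rw [h3]
    set q : ℂ := c * (starRingEnd ℂ) z with hq
    have h4 : Complex.re (((‖B y‖^2 : ℝ) : ℂ) - (starRingEnd ℂ) (2:ℂ)⁻¹
        * ((starRingEnd ℂ) q + q)) = ‖B y‖^2 - q.re := by
      rw [show (starRingEnd ℂ) q + q = ((2*q.re : ℝ) : ℂ) by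
        rw [add_comm, Complex.add_conj]]
      rw [show (starRingEnd ℂ) (2:ℂ)⁻¹ = ((2⁻¹:ℝ):ℂ) by norm_num [Complex.ext_iff]]
      rw [← Complex.ofReal_mul, ← Complex.ofReal_sub, Complex.ofReal_re]
      ring
    rw [h4]
    -- now the main estimate: q.re ≤ ‖B y‖^2
    have hBy : B y = y + (α:ℂ) • T y := rfl
    set w : ℂ := ⟪y, T y⟫_ℂ with hw
    set s : ℝ := ‖y‖^2 with hs
    set t : ℝ := ‖T y‖^2 with ht
    have hyy : ⟪y, y⟫_ℂ = ((s : ℝ) : ℂ) := by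
      rw [inner_self_eq_norm_sq_to_K]; norm_cast
    have hTT : ⟪T y, T y⟫_ℂ = ((t : ℝ) : ℂ) := by
      rw [inner_self_eq_norm_sq_to_K]; norm_cast
    have hconj : ⟪T y, y⟫_ℂ = (starRingEnd ℂ) w := (inner_conj_symm (T y) y).symm
    have hZ : (starRingEnd ℂ) z = ((α*s : ℝ) : ℂ) + w + ((α^2 : ℝ) : ℂ) * (starRingEnd ℂ) w
        + ((α*t : ℝ) : ℂ) := by
      rw [hz, inner_conj_symm, hφB, hBy]
      rw [inner_add_left, inner_add_right, inner_add_right, inner_smul_left,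
        inner_smul_right, inner_smul_left, inner_smul_right,
        hyy, hTT, hconj, Complex.conj_ofReal]
      push_cast
      ring
    have hqre : q.re = Real.cos θ * (α*s + α*t + (1+α^2)*w.re)
        + Real.sin θ * (1-α^2) * w.im := by
      rw [hq, Complex.mul_re, hZ]
      simp only [Complex.add_re, Complex.add_im, Complex.mul_re, Complex.mul_im,
        Complex.ofReal_re, Complex.ofReal_im, Complex.conj_re, Complex.conj_im,
        hcre, hcim]
      ring
    have hBB : ⟪B y, B y⟫_ℂ = ((s : ℝ) : ℂ) + (α:ℂ)*w + (α:ℂ)*(starRingEnd ℂ) w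
        + ((α^2*t : ℝ) : ℂ) := by
      rw [hBy, inner_add_left, inner_add_right, inner_add_right, inner_smul_left,
        inner_smul_right, inner_smul_left, inner_smul_right,
        hyy, hTT, hconj, Complex.conj_ofReal]
      push_cast
      ring
    have hN : ‖B y‖^2 = s + 2*α*w.re + α^2*t := by
      have hrr := inner_self_eq_norm_sq (𝕜 := ℂ) (B y)
      rw [hBB] at hrr
      rw [← hrr]
      simp only [RCLike.re_to_complex, Complex.add_re, Complex.mul_re, Complex.ofReal_re,
        Complex.ofReal_im, Complex.conj_re, Complex.conj_im]
      ring
    have hw2 : w.re^2 + w.im^2 = ‖w‖^2 := by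
      rw [Complex.sq_norm, Complex.normSq_apply]
      ring
    have hst : w.re^2 + w.im^2 ≤ s * t := by
      rw [hw2, hs, ht, ← mul_pow]
      exact pow_le_pow_left₀ (norm_nonneg w)
        (by rw [hw]; exact norm_inner_le_norm y (T y)) 2
    have hss : w.re^2 + w.im^2 ≤ s^2 := by
      rw [hw2]
      have h5 : ‖w‖ ≤ s := by rw [hw, hs]; exact hnr y
      exact pow_le_pow_left₀ (norm_nonneg w) h5 2
    have hkey := key α (Real.cos θ) (Real.sin θ) s t w.re w.im hα0 hα1 hθ
      (by rw [← Real.sin_sq_add_cos_sq θ]; ring)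
      (by rw [hs]; positivity) (by rw [ht]; positivity) hst hss
    rw [hqre, hN]
    linarith
end

section
/- If the 2×2 complex matrix [[a,b],[c,d]] has numerical radius at most 1, then |c| ≤ 1 + √(1 - |a|²). -/
theorem stmt19aux (α δ1 δ2 β γ : ℝ) (hα0 : 0 ≤ α) (hα1 : α ≤ 1) (hδ1le : δ1 ≤ 1)
    (h1 : ∀ t s : ℝ, t^2+s^2 = 1 → (β+γ)*(t*s) ≤ (1-α)*t^2 + (1-δ1)*s^2)
    (h2 : ∀ t s : ℝ, t^2+s^2 = 1 → (β+γ)*(t*s) ≤ (1+α)*t^2 + (1+δ1)*s^2)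
    (h3 : ∀ t s : ℝ, t^2+s^2 = 1 → (γ-β)*(t*s) ≤ t^2 + (1-δ2)*s^2)
    (h4 : ∀ t s : ℝ, t^2+s^2 = 1 → (γ-β)*(t*s) ≤ t^2 + (1+δ2)*s^2) :
    γ ≤ 1 + Real.sqrt (1-α^2) := by
  have hu : (Real.sqrt (1/2))^2 = 1/2 := Real.sq_sqrt (by norm_num)
  have huu : Real.sqrt (1/2) * Real.sqrt (1/2) = 1/2 := by rw [← pow_two, hu]
  have hsum : (Real.sqrt (1/2))^2 + (Real.sqrt (1/2))^2 = 1 := by rw [hu]; norm_num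
  have hminus : γ - β ≤ 2 := by
    have i3 := h3 _ _ hsum
    have i4 := h4 _ _ hsum
    rw [huu, hu] at i3 i4
    linarith
  set r := Real.sqrt (1 - α^2) with hrdef
  have hr0 : 0 ≤ r := Real.sqrt_nonneg _
  have hr2 : r^2 = 1 - α^2 := Real.sq_sqrt (by nlinarith)
  have hplus : β + γ ≤ 2 * r := by
    rcases hr0.lt_or_eq with hrpos | hrzero
    · have ht1 : (Real.sqrt ((1+α)/2))^2 = (1+α)/2 := Real.sq_sqrt (by linarith)
      have hs1 : (Real.sqrt ((1-α)/2))^2 = (1-α)/2 := Real.sq_sqrt (by linarith)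
      have hts1 : (Real.sqrt ((1+α)/2))^2 + (Real.sqrt ((1-α)/2))^2 = 1 := by
        rw [ht1, hs1]; ring
      have hst1 : (Real.sqrt ((1-α)/2))^2 + (Real.sqrt ((1+α)/2))^2 = 1 := by
        rw [ht1, hs1]; ring
      have hprod : Real.sqrt ((1+α)/2) * Real.sqrt ((1-α)/2) = r / 2 := by
        rw [← Real.sqrt_mul (by linarith),
          show (1+α)/2 * ((1-α)/2) = (1 - α^2) * (1/2)^2 by ring,
          Real.sqrt_mul (by nlinarith), Real.sqrt_sq (by norm_num)]
        ring
      have hprod' : Real.sqrt ((1-α)/2) * Real.sqrt ((1+α)/2) = r / 2 := by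
        rw [mul_comm]; exact hprod
      have I1 := h1 _ _ hts1
      have I2 := h2 _ _ hst1
      rw [hprod, ht1, hs1] at I1
      rw [hprod', ht1, hs1] at I2
      have hPr : (β + γ) * r ≤ 2 * r^2 := by
        have J1 := mul_le_mul_of_nonneg_left I1 (by linarith : (0:ℝ) ≤ 1+α)
        have J2 := mul_le_mul_of_nonneg_left I2 (by linarith : (0:ℝ) ≤ 1-α)
        nlinarith [J1, J2, hr2]
      nlinarith [hPr, hrpos, mul_pos hrpos hrpos]
    · -- r = 0 hence α = 1
      have hr2' : (0:ℝ) = 1 - α^2 := by rw [← hrzero] at hr2; simpa using hr2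
      have hfac : (α - 1)*(α + 1) = 0 := by linarith [hr2']
      have hα1' : α = 1 := by
        rcases mul_eq_zero.mp hfac with h | h
        · linarith
        · linarith
      by_contra hP'
      push_neg at hP'
      have hP : 0 < β + γ := by rw [← hrzero] at hP'; linarith
      obtain ⟨P, hPdef⟩ : ∃ P, P = β + γ := ⟨_, rfl⟩
      obtain ⟨q, hqdef⟩ : ∃ q, q = 1 - δ1 := ⟨_, rfl⟩
      rw [← hPdef] at hP
      have hq0 : 0 ≤ q := by rw [hqdef]; linarith
      obtain ⟨m, hmdef⟩ : ∃ m, m = Real.sqrt (P^2 + q^2 + 1) := ⟨_, rfl⟩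
      have hm2 : m^2 = P^2 + q^2 + 1 := by rw [hmdef]; exact Real.sq_sqrt (by positivity)
      have hm0 : 0 < m := by rw [hmdef]; exact Real.sqrt_pos.mpr (by positivity)
      have hQ : (Real.sqrt (q^2+1))^2 = q^2+1 := Real.sq_sqrt (by positivity)
      have hgt : q < Real.sqrt (q^2+1) := by
        nlinarith [hQ, Real.sqrt_nonneg (q^2+1), hq0]
      have hts0 : (Real.sqrt (q^2+1) / m)^2 + (P / m)^2 = 1 := by
        rw [div_pow, div_pow, hQ, ← add_div,
          show q^2 + 1 + P^2 = m^2 by rw [hm2]; ring,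
          div_self (ne_of_gt (pow_pos hm0 2))]
      have hI := h1 _ _ hts0
      rw [hα1', ← hPdef] at hI
      have hprod0 : Real.sqrt (q^2+1) / m * (P / m) = Real.sqrt (q^2+1) * P / m^2 := by
        rw [div_mul_div_comm, ← pow_two]
      have hs0sq : (P/m)^2 = P^2/m^2 := by rw [div_pow]
      rw [hprod0, hs0sq] at hI
      have hm2pos : (0:ℝ) < m^2 := pow_pos hm0 2
      have hI' : P * (Real.sqrt (q^2+1) * P) ≤ q * P^2 := by
        have hK := mul_le_mul_of_nonneg_right hI hm2pos.le
        have e1 : P * (Real.sqrt (q^2+1) * P / m^2) * m^2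
            = P * (Real.sqrt (q^2+1) * P) := by field_simp
        have e2 : ((1-1) * (Real.sqrt (q^2+1) / m)^2 + (1 - δ1) * (P^2/m^2)) * m^2
            = q * P^2 := by rw [hqdef]; field_simp; ring
        rw [e1, e2] at hK
        exact hK
      have : P ≤ 0 := by
        linarith only [hI', mul_lt_mul_of_pos_left hgt (mul_pos hP hP)]
      linarith
  linarith

open scoped Matrix

/-- If the 2×2 matrix `[[a,b],[c,d]]` has numerical radius at most 1, then
`|c| ≤ 1 + √(1 - |a|²)`. -/
theorem stmt19 (a b c d : ℂ)
    (hw : ∀ x : Fin 2 → ℂ, star x ⬝ᵥ x = 1 →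
      ‖star x ⬝ᵥ (!![a, b; c, d]).mulVec x‖ ≤ 1) :
    ‖c‖ ≤ 1 + Real.sqrt (1 - ‖a‖ ^ 2) := by
  obtain ⟨ω, hω, hωa⟩ : ∃ ω : ℂ, ‖ω‖ = 1 ∧ ω * a = (‖a‖ : ℂ) := by
    by_cases ha : a = 0
    · exact ⟨1, by simp, by simp [ha]⟩
    · refine ⟨(starRingEnd ℂ) a / (‖a‖ : ℂ), ?_, ?_⟩
      · rw [norm_div, Complex.norm_conj, Complex.norm_real,
          norm_norm,
          div_self (by simpa using ha)]
      · rw [div_mul_eq_mul_div, Complex.conj_mul', div_eq_iff (by simpa using ha)]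
        ring
  obtain ⟨v, hv, hvc⟩ : ∃ v : ℂ, ‖v‖ = 1 ∧
      ω * c * (starRingEnd ℂ) v = (‖c‖ : ℂ) := by
    by_cases hc : c = 0
    · exact ⟨1, by simp, by simp [hc]⟩
    · refine ⟨ω * c / (‖c‖ : ℂ), ?_, ?_⟩
      · rw [norm_div, norm_mul, hω, one_mul, Complex.norm_real,
          norm_norm,
          div_self (by simpa using hc)]
      · have hωω : ω * (starRingEnd ℂ) ω = 1 := by
          rw [Complex.mul_conj, Complex.normSq_eq_norm_sq, hω]; norm_num
        have hcc : c * (starRingEnd ℂ) c = (‖c‖ : ℂ)^2 := by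
          rw [Complex.mul_conj, Complex.normSq_eq_norm_sq]; push_cast; ring
        have hc0 : (‖c‖ : ℂ) ≠ 0 := by simpa using hc
        rw [map_div₀, map_mul, Complex.conj_ofReal]
        field_simp
        linear_combination (c * (starRingEnd ℂ) c) * hωω + hcc
  -- main extraction
  have main : ∀ μ : ℂ, ‖μ‖ = 1 → ∀ t s : ℝ, t^2 + s^2 = 1 →
      ‖(‖a‖ : ℂ) * t^2 + (ω*d) * s^2
        + (t*s) * ((ω*v*b) * μ + (‖c‖ : ℂ) * (starRingEnd ℂ) μ)‖ ≤ 1 := by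
    intro μ hμ t s hts
    have hv1 : v * (starRingEnd ℂ) v = 1 := by
      rw [Complex.mul_conj, Complex.normSq_eq_norm_sq, hv]; norm_num
    have hμ1 : μ * (starRingEnd ℂ) μ = 1 := by
      rw [Complex.mul_conj, Complex.normSq_eq_norm_sq, hμ]; norm_num
    set x : Fin 2 → ℂ := ![(t:ℂ), (s:ℂ) * v * μ] with hxdef
    have hts' : (t:ℂ)^2 + (s:ℂ)^2 = 1 := by exact_mod_cast congrArg (Complex.ofReal) hts
    have hx : star x ⬝ᵥ x = 1 := by
      simp only [hxdef, dotProduct, Fin.sum_univ_two, Pi.star_apply,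
        Matrix.cons_val_zero, Matrix.cons_val_one, Matrix.head_cons, RCLike.star_def,
        map_mul, Complex.conj_ofReal]
      linear_combination hts' + ((s:ℂ)^2 * (μ * (starRingEnd ℂ) μ)) * hv1 + (s:ℂ)^2 * hμ1
    have hVeq : (‖a‖ : ℂ) * t^2 + (ω*d) * s^2
        + (t*s) * ((ω*v*b) * μ + (‖c‖ : ℂ) * (starRingEnd ℂ) μ)
        = ω * (star x ⬝ᵥ (!![a, b; c, d]).mulVec x) := by
      simp only [hxdef, dotProduct, Matrix.mulVec, Fin.sum_univ_two, Pi.star_apply,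
        Matrix.cons_val_zero, Matrix.cons_val_one, Matrix.head_cons, RCLike.star_def,
        map_mul, Complex.conj_ofReal, Matrix.cons_val', Matrix.empty_val',
        Matrix.cons_val_fin_one, Matrix.head_fin_const, Matrix.of_apply]
      linear_combination (-(t:ℂ)^2) * hωa + (-(t:ℂ)*s*(starRingEnd ℂ) μ) * hvc
        + (-(ω*d*(s:ℂ)^2*(μ*(starRingEnd ℂ) μ))) * hv1 + (-(ω*d*(s:ℂ)^2)) * hμ1
    rw [hVeq, norm_mul, hω, one_mul]
    exact hw x hx
  have hα0 : 0 ≤ ‖a‖ := norm_nonneg a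
  have hα1 : ‖a‖ ≤ 1 := by
    have h := main 1 (by simp) 1 0 (by norm_num)
    simpa [_root_.abs_of_nonneg hα0] using h
  have hδ1le : (ω*d).re ≤ 1 := by
    have h := main 1 (by simp) 0 1 (by norm_num)
    simp only [Complex.ofReal_zero, Complex.ofReal_one, one_pow, mul_one, zero_pow,
      mul_zero, zero_mul, add_zero, zero_add, ne_eq, OfNat.ofNat_ne_zero,
      not_false_eq_true] at h
    exact (Complex.re_le_norm _).trans h
  have h1 : ∀ t s : ℝ, t^2 + s^2 = 1 →
      ((ω*v*b).re + ‖c‖)*(t*s)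
        ≤ (1 - ‖a‖)*t^2 + (1-(ω*d).re)*s^2 := by
    intro t s hts
    have h := main 1 (by simp) t s hts
    have hre := (abs_le.mp ((Complex.abs_re_le_norm _).trans h)).2
    have hzre : ((‖a‖ : ℂ) * t^2 + (ω*d) * s^2
        + (t*s) * ((ω*v*b)*1 + (‖c‖ : ℂ) * (starRingEnd ℂ) 1)).re
        = ‖a‖*t^2 + (ω*d).re*s^2 + (t*s)*((ω*v*b).re+‖c‖) := by
      simp only [map_one, mul_one, ← Complex.ofReal_pow, ← Complex.ofReal_mul,
        Complex.add_re, Complex.mul_re, Complex.ofReal_re, Complex.ofReal_im,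
        Complex.add_im, zero_mul]
      ring
    rw [hzre] at hre
    linarith [hre, hts]
  have h2 : ∀ t s : ℝ, t^2 + s^2 = 1 →
      ((ω*v*b).re + ‖c‖)*(t*s)
        ≤ (1 + ‖a‖)*t^2 + (1+(ω*d).re)*s^2 := by
    intro t s hts
    have h := main (-1) (by simp) t s hts
    have hre := (abs_le.mp ((Complex.abs_re_le_norm _).trans h)).1
    have hzre : ((‖a‖ : ℂ) * t^2 + (ω*d) * s^2
        + (t*s) * ((ω*v*b)*(-1) + (‖c‖ : ℂ) * (starRingEnd ℂ) (-1))).re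
        = ‖a‖*t^2 + (ω*d).re*s^2 - (t*s)*((ω*v*b).re+‖c‖) := by
      simp only [map_neg, map_one, mul_neg, mul_one, ← Complex.ofReal_pow,
        ← Complex.ofReal_mul, Complex.add_re, Complex.mul_re, Complex.ofReal_re,
        Complex.ofReal_im, Complex.neg_re, Complex.neg_im]
      ring
    rw [hzre] at hre
    linarith [hre, hts]
  have h3 : ∀ t s : ℝ, t^2 + s^2 = 1 →
      (‖c‖ - (ω*v*b).re)*(t*s) ≤ t^2 + (1-(ω*d).im)*s^2 := by
    intro t s hts
    have h := main (-Complex.I) (by simp) t s hts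
    have him := (abs_le.mp ((Complex.abs_im_le_norm _).trans h)).2
    have hzim : ((‖a‖ : ℂ) * t^2 + (ω*d) * s^2
        + (t*s) * ((ω*v*b)*(-Complex.I) + (‖c‖ : ℂ) * (starRingEnd ℂ) (-Complex.I))).im
        = (ω*d).im*s^2 + (t*s)*(‖c‖ - (ω*v*b).re) := by
      simp only [← Complex.ofReal_pow, ← Complex.ofReal_mul, map_neg, Complex.conj_I,
        Complex.add_im, Complex.mul_im, Complex.ofReal_re, Complex.ofReal_im,
        Complex.mul_re, Complex.I_re, Complex.I_im, Complex.neg_im, Complex.neg_re]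
      ring
    rw [hzim] at him
    linarith [him, hts]
  have h4 : ∀ t s : ℝ, t^2 + s^2 = 1 →
      (‖c‖ - (ω*v*b).re)*(t*s) ≤ t^2 + (1+(ω*d).im)*s^2 := by
    intro t s hts
    have h := main Complex.I (by simp) t s hts
    have him := (abs_le.mp ((Complex.abs_im_le_norm _).trans h)).1
    have hzim : ((‖a‖ : ℂ) * t^2 + (ω*d) * s^2
        + (t*s) * ((ω*v*b)*Complex.I + (‖c‖ : ℂ) * (starRingEnd ℂ) Complex.I)).im
        = (ω*d).im*s^2 + (t*s)*((ω*v*b).re - ‖c‖) := by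
      simp only [← Complex.ofReal_pow, ← Complex.ofReal_mul, Complex.conj_I,
        Complex.add_im, Complex.mul_im, Complex.ofReal_re, Complex.ofReal_im,
        Complex.mul_re, Complex.I_re, Complex.I_im, Complex.neg_im, Complex.neg_re,
        map_neg]
      ring
    rw [hzim] at him
    linarith [him, hts]
  exact stmt19aux (‖a‖) ((ω*d).re) ((ω*d).im) ((ω*v*b).re) (‖c‖)
    hα0 hα1 hδ1le h1 h2 h3 h4
end
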